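/- arXiv:1607.06660 — 8 statements merged into one kernel-verified Lean document; each statement's English description precedes it below -/
import Mathlib

section
/- Let p ≥ 1, let x be a natural number with x < 2^p − 1, let e be any natural number, and set s = e mod p. Then (x · 2^e) mod (2^p − 1) = (x mod 2^(p−s)) · 2^s + ⌊x / 2^(p−s)⌋. In particular, multiplication by a power of two modulo the Mersenne number 2^p − 1 acts as a left bit-rotation of the p-bit representation of x by s positions. -/
/-- Let `p ≥ 1`, `x < 2^p − 1`, `e` arbitrary, and `s = e mod p`.  Then
`(x · 2^e) mod (2^p − 1) = (x mod 2^(p−s)) · 2^s + ⌊x / 2^(p−s)⌋`: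
multiplication by a power of two modulo the Mersenne number `2^p − 1` acts as a
left bit-rotation of the `p`-bit representation of `x` by `s` positions. -/
theorem mul_pow_two_mod_mersenne_eq_rotate (p x e s : ℕ) (hp : 1 ≤ p)
    (hx : x < 2 ^ p - 1) (hs : s = e % p) :
    (x * 2 ^ e) % (2 ^ p - 1) = (x % 2 ^ (p - s)) * 2 ^ s + x / 2 ^ (p - s) := by
  subst hs
  have hsp : e % p < p := Nat.mod_lt _ hp
  set s := e % p with hs
  set q := x / 2 ^ (p - s) with hq
  set r := x % 2 ^ (p - s) with hr
  have hB : 0 < 2 ^ (p - s) := Nat.pow_pos two_pos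
  have hA : 0 < 2 ^ s := Nat.pow_pos two_pos
  have hxqr : 2 ^ (p - s) * q + r = x := Nat.div_add_mod x _
  have hrB : r < 2 ^ (p - s) := Nat.mod_lt _ hB
  have hAB : 2 ^ (p - s) * 2 ^ s = 2 ^ p := by
    rw [← pow_add]; congr 1; omega
  have h2p : 1 ≤ 2 ^ p := Nat.one_le_two_pow
  have hqA : q < 2 ^ s := by
    rw [hq, Nat.div_lt_iff_lt_mul hB]
    calc x < 2 ^ p - 1 := hx
      _ ≤ 2 ^ s * 2 ^ (p - s) := by rw [mul_comm, hAB]; omega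
  have h1 : (2 ^ p) ≡ 1 [MOD 2 ^ p - 1] := ((Nat.modEq_iff_dvd' h2p).mpr dvd_rfl).symm
  have hmod : x * 2 ^ e ≡ r * 2 ^ s + q [MOD 2 ^ p - 1] := by
    calc x * 2 ^ e = x * ((2 ^ p) ^ (e / p) * 2 ^ s) := by
          rw [← pow_mul, ← pow_add]
          congr 1
          congr 1
          exact (Nat.div_add_mod e p).symm
      _ ≡ x * (1 ^ (e / p) * 2 ^ s) [MOD 2 ^ p - 1] :=
          Nat.ModEq.mul_left x (Nat.ModEq.mul_right _ (h1.pow _))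
      _ = q * 2 ^ p + r * 2 ^ s := by
          rw [one_pow, one_mul, ← hxqr]; ring_nf
          rw [← hAB]; ring
      _ ≡ q * 1 + r * 2 ^ s [MOD 2 ^ p - 1] :=
          Nat.ModEq.add_right _ (Nat.ModEq.mul_left q h1)
      _ = r * 2 ^ s + q := by ring
  have hbound : r * 2 ^ s + q < 2 ^ p - 1 := by
    have key : r * 2 ^ s + q + 2 ≤ 2 ^ p := by
      rcases Nat.lt_or_ge (q + 2) (2 ^ s + 1) with h | h
      · calc r * 2 ^ s + q + 2 ≤ r * 2 ^ s + 2 ^ s := by omega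
          _ = (r + 1) * 2 ^ s := by ring
          _ ≤ 2 ^ (p - s) * 2 ^ s := by
              apply Nat.mul_le_mul_right; omega
          _ = 2 ^ p := hAB
      · -- q = 2^s - 1
        have hq1 : q = 2 ^ s - 1 := by omega
        have hr2 : r + 2 ≤ 2 ^ (p - s) := by
          by_contra hcon
          have : r = 2 ^ (p - s) - 1 := by omega
          have e1 : 2 ^ (p - s) * (2 ^ s - 1) = 2 ^ (p - s) * 2 ^ s - 2 ^ (p - s) := by
            rw [Nat.mul_sub, mul_one]
          have : x = 2 ^ p - 1 := by
            rw [← hxqr, this, hq1, ← hAB, e1]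
            have hBA : 2 ^ (p - s) ≤ 2 ^ (p - s) * 2 ^ s := Nat.le_mul_of_pos_right _ hA
            omega
          omega
        calc r * 2 ^ s + q + 2 = r * 2 ^ s + 2 ^ s + 1 := by omega
          _ = (r + 1) * 2 ^ s + 1 := by ring
          _ ≤ (2 ^ (p - s) - 1) * 2 ^ s + 1 := by
              have : r + 1 ≤ 2 ^ (p - s) - 1 := by omega
              exact Nat.add_le_add_right (Nat.mul_le_mul_right _ this) 1
          _ ≤ 2 ^ (p - s) * 2 ^ s - 2 ^ s + 1 := by
              rw [Nat.sub_one_mul]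
          _ ≤ 2 ^ p := by rw [hAB]; omega
    omega
  calc (x * 2 ^ e) % (2 ^ p - 1) = (r * 2 ^ s + q) % (2 ^ p - 1) := hmod
    _ = r * 2 ^ s + q := Nat.mod_eq_of_lt hbound
end

section
/- Let p ≥ 1 and let x < 2^p be a natural number with binary representation x = Σ_{i=0}^{p−1} x_i · 2^(p−i−1), where each x_i ∈ {0,1}. Then for every natural number e, x · 2^e ≡ Σ_{i=0}^{p−1} x_i · 2^((p−i−1+e) mod p) (mod 2^p − 1). -/
lemma sum_bits_mod (x n : ℕ) :
    ∑ j ∈ Finset.range n, (x / 2 ^ j % 2) * 2 ^ j = x % 2 ^ n := by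
  induction n with
  | zero => simp [Nat.mod_one]
  | succ n ih =>
    rw [Finset.sum_range_succ, ih, Nat.pow_succ, Nat.mod_mul]
    ring

lemma pow_mod_mersenne (p k : ℕ) (_hp : 1 ≤ p) :
    (2 : ℕ) ^ k ≡ 2 ^ (k % p) [MOD 2 ^ p - 1] := by
  conv_lhs => rw [← Nat.mod_add_div k p]
  rw [pow_add, pow_mul]
  have h1 : (2 : ℕ) ^ p ≡ 1 [MOD 2 ^ p - 1] :=
    ((Nat.modEq_iff_dvd' Nat.one_le_two_pow).mpr dvd_rfl).symm
  calc 2 ^ (k % p) * (2 ^ p) ^ (k / p)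
      ≡ 2 ^ (k % p) * 1 ^ (k / p) [MOD 2 ^ p - 1] := Nat.ModEq.mul_left _ (h1.pow _)
    _ = 2 ^ (k % p) := by ring

/-- Let `p ≥ 1` and `x < 2^p` with binary representation
`x = Σ_{i=0}^{p−1} x_i · 2^(p−i−1)` where `x_i = ⌊x / 2^(p−i−1)⌋ mod 2`.
Then for every `e`,
`x · 2^e ≡ Σ_{i=0}^{p−1} x_i · 2^((p−i−1+e) mod p)  (mod 2^p − 1)`. -/
theorem mul_pow_two_mod_mersenne_bits (p x e : ℕ) (hp : 1 ≤ p) (hx : x < 2 ^ p) :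
    x * 2 ^ e ≡
      ∑ i ∈ Finset.range p, (x / 2 ^ (p - i - 1) % 2) * 2 ^ ((p - i - 1 + e) % p)
      [MOD 2 ^ p - 1] := by
  have hxeq : x = ∑ i ∈ Finset.range p, (x / 2 ^ (p - i - 1) % 2) * 2 ^ (p - i - 1) := by
    simp only [show ∀ i, p - i - 1 = p - 1 - i from fun i => by omega]
    rw [Finset.sum_range_reflect (fun j => x / 2 ^ j % 2 * 2 ^ j) p, sum_bits_mod,
      Nat.mod_eq_of_lt hx]
  conv_lhs => rw [hxeq]
  rw [Finset.sum_mul]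
  classical
  induction (Finset.range p) using Finset.induction_on with
  | empty => simp [Nat.ModEq.refl]
  | insert _ _ h ih =>
    rw [Finset.sum_insert h, Finset.sum_insert h]
    exact Nat.ModEq.add (by rw [mul_assoc, ← pow_add]; exact (pow_mod_mersenne p _ hp).mul_left _) ih
end

section
/- Let 0 ≤ i < N, let 1 ≤ k ≤ i, and suppose B[j] = q for every j with i−k < j ≤ i. Then P'[i] = P'[i−k] · 2^{k·τ} mod q. -/
/-- Prefix fingerprints modulo the Mersenne number `q = 2^τ − 1` of a sequence
of blocks `B`:  `P'[i] = Σ_{j=0}^{i} B[j]·2^((i−j)·τ) mod q`. -/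
def prefixFP (τ : ℕ) (B : ℕ → ℕ) (i : ℕ) : ℕ :=
  (∑ j ∈ Finset.range (i + 1), B j * 2 ^ ((i - j) * τ)) % (2 ^ τ - 1)

/-- Let `τ ≥ 1`, `q = 2^τ − 1`, and let `B[0],…,B[N−1]` be blocks with
`0 ≤ B[i] ≤ 2^τ − 1`.  Let `0 ≤ i < N`, `1 ≤ k ≤ i`, and suppose `B[j] = q`
for every `j` with `i − k < j ≤ i`.  Then `P'[i] = P'[i−k] · 2^(k·τ) mod q`. -/
theorem fp_skip_q_blocks (τ N : ℕ) (hτ : 1 ≤ τ) (B : ℕ → ℕ)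
    (hB : ∀ i < N, B i ≤ 2 ^ τ - 1)
    (i k : ℕ) (hiN : i < N) (hk : 1 ≤ k) (hki : k ≤ i)
    (hq : ∀ j, i - k < j → j ≤ i → B j = 2 ^ τ - 1) :
    prefixFP τ B i = (prefixFP τ B (i - k) * 2 ^ (k * τ)) % (2 ^ τ - 1) := by
  set q := 2 ^ τ - 1 with hqdef
  unfold prefixFP
  have hsplit : Finset.range (i + 1) =
      Finset.range (i - k + 1) ∪ Finset.Ico (i - k + 1) (i + 1) := by
    rw [Finset.range_eq_Ico, Finset.range_eq_Ico, Finset.Ico_union_Ico_eq_Ico] <;> omega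
  have hdisj : Disjoint (Finset.range (i - k + 1)) (Finset.Ico (i - k + 1) (i + 1)) := by
    rw [Finset.range_eq_Ico]
    exact Finset.Ico_disjoint_Ico_consecutive 0 (i - k + 1) (i + 1)
  rw [hsplit, Finset.sum_union hdisj]
  have hS1 : (∑ j ∈ Finset.range (i - k + 1), B j * 2 ^ ((i - j) * τ)) =
      (∑ j ∈ Finset.range (i - k + 1), B j * 2 ^ ((i - k - j) * τ)) * 2 ^ (k * τ) := by
    rw [Finset.sum_mul]
    refine Finset.sum_congr rfl fun j hj => ?_
    have hj' : j ≤ i - k := by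
      have := Finset.mem_range.mp hj; omega
    rw [mul_assoc, ← pow_add]
    congr 2
    have h1 : i - j = (i - k - j) + k := by omega
    rw [h1, add_mul]
  have hS2 : q ∣ ∑ j ∈ Finset.Ico (i - k + 1) (i + 1), B j * 2 ^ ((i - j) * τ) := by
    refine Finset.dvd_sum fun j hj => ?_
    have hj' := Finset.mem_Ico.mp hj
    rw [hq j (by omega) (by omega)]
    exact Dvd.dvd.mul_right dvd_rfl _
  rw [hS1, Nat.mod_mul_mod]
  obtain ⟨c, hc⟩ := hS2
  rw [hc, Nat.add_mul_mod_self_left]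
end

section
/- Define Q[i] = 1 if B[i] = q and Q[i] = 0 otherwise. Then for every 0 ≤ i < N, B[i] = Q[i]·q + (1 − Q[i]) · ((P'[i] − 2^τ · P'[i−1]) mod q), where the inner subtraction is taken modulo q with result in {0,…,q−1}. In particular, the arrays P' and Q together determine the block sequence B. -/
/-- Let `τ ≥ 1`, `q = 2^τ − 1`, and let `B[0],…,B[N−1]` be blocks with
`0 ≤ B[i] ≤ 2^τ − 1`.  Define `Q[i] = 1` if `B[i] = q` and `Q[i] = 0`
otherwise.  Then for every `0 ≤ i < N`,
`B[i] = Q[i]·q + (1 − Q[i]) · ((P'[i] − 2^τ · P'[i−1]) mod q)`,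
where the inner subtraction is taken modulo `q` with result in `{0,…,q−1}`
and `P'[−1] = 0`. -/
theorem block_eq_of_fp_and_marks (τ N : ℕ) (hτ : 1 ≤ τ) (B : ℕ → ℕ)
    (hB : ∀ i < N, B i ≤ 2 ^ τ - 1)
    (Q : ℕ → ℕ) (hQ : ∀ i, Q i = if B i = 2 ^ τ - 1 then 1 else 0)
    (i : ℕ) (hiN : i < N) :
    B i = Q i * (2 ^ τ - 1) +
      (1 - Q i) *
        ((prefixFP τ B i + (2 ^ τ - 1)
            - (2 ^ τ * (if i = 0 then 0 else prefixFP τ B (i - 1))) % (2 ^ τ - 1))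
          % (2 ^ τ - 1)) := by
  have h2 : 2 ≤ 2 ^ τ := by
    calc 2 = 2 ^ 1 := rfl
    _ ≤ 2 ^ τ := Nat.pow_le_pow_right (by norm_num) hτ
  set q : ℕ := 2 ^ τ - 1 with hqdef
  have hq : 1 ≤ q := by omega
  rw [hQ]
  by_cases hBi : B i = q
  · simp [hBi]
  · have hBlt : B i < q := lt_of_le_of_ne (hB i hiN) hBi
    simp only [hBi, if_false, zero_mul, Nat.sub_zero, one_mul, zero_add]
    set X := (2 ^ τ * (if i = 0 then 0 else prefixFP τ B (i - 1))) % q with hXdef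
    have hXlt : X < q := Nat.mod_lt _ hq
    -- key congruence
    have key : prefixFP τ B i ≡ B i + X [MOD q] := by
      cases i with
      | zero =>
        have hX0 : X = 0 := by simp [hXdef]
        have : prefixFP τ B 0 = B 0 % q := by
          simp [prefixFP, hqdef]
        rw [this, hX0, Nat.add_zero]
        exact Nat.mod_modEq _ _
      | succ k =>
        have hsplit : (∑ j ∈ Finset.range (k + 1 + 1), B j * 2 ^ ((k + 1 - j) * τ))
            = B (k + 1) + 2 ^ τ * ∑ j ∈ Finset.range (k + 1), B j * 2 ^ ((k - j) * τ) := by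
          rw [Finset.sum_range_succ, Finset.mul_sum]
          rw [add_comm]
          congr 1
          · simp
          · apply Finset.sum_congr rfl
            intro j hj
            have hjk : j ≤ k := Nat.lt_succ_iff.mp (Finset.mem_range.mp hj)
            have : (k + 1 - j) * τ = (k - j) * τ + τ := by
              have : k + 1 - j = (k - j) + 1 := by omega
              rw [this]; ring
            rw [this, pow_add]; ring
        have h1 : prefixFP τ B (k + 1) ≡
            (∑ j ∈ Finset.range (k + 1 + 1), B j * 2 ^ ((k + 1 - j) * τ)) [MOD q] :=
          Nat.mod_modEq _ _
        have h2' : (B (k + 1) + 2 ^ τ * ∑ j ∈ Finset.range (k + 1), B j * 2 ^ ((k - j) * τ))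
            ≡ B (k + 1) + X [MOD q] := by
          have hX : X = (2 ^ τ * prefixFP τ B k) % q := by
            simp [hXdef]
          rw [hX]
          refine Nat.ModEq.add_left _ ?_
          refine (Nat.ModEq.mul_left _ ?_).trans (Nat.mod_modEq _ _).symm
          exact (Nat.mod_modEq _ _).symm
        rw [hsplit] at h1
        exact h1.trans h2'
    have hle : X ≤ prefixFP τ B i + q := by omega
    have hadd : (prefixFP τ B i + q - X) + X = prefixFP τ B i + q := by omega
    have hA : prefixFP τ B i + q ≡ B i + X [MOD q] := by
      refine (Nat.ModEq.add_right q key).trans ?_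
      show (B i + X + q) % q = (B i + X) % q
      exact Nat.add_mod_right _ _
    rw [← hadd] at hA
    have h3 : (prefixFP τ B i + q - X) ≡ B i [MOD q] :=
      Nat.ModEq.add_right_cancel' X hA
    have : (prefixFP τ B i + q - X) % q = B i % q := h3
    rw [this, Nat.mod_eq_of_lt hBlt]
end

section
/- Let B and B̂ be two block sequences of the same length N with values in {0,…,2^τ−1}. Suppose that for every 0 ≤ i < N we have (B[i] = q ⟺ B̂[i] = q), and that the corresponding prefix-fingerprint arrays agree at every position i with B[i] ≠ q (i.e., P'[i] = P̂'[i] whenever B[i] ≠ q). Then B = B̂. That is, the data stored by the structure (the sampled fingerprints at non-q blocks together with the set of positions of q-blocks) determines the text uniquely. -/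
lemma modEq_sum {n : ℕ} (s : Finset ℕ) (f g : ℕ → ℕ)
    (h : ∀ j ∈ s, f j ≡ g j [MOD n]) :
    (∑ j ∈ s, f j) ≡ (∑ j ∈ s, g j) [MOD n] := by
  classical
  induction s using Finset.induction with
  | empty => simp [Nat.ModEq.refl]
  | @insert a s hx ih =>
    rw [Finset.sum_insert hx, Finset.sum_insert hx]
    exact (h a (Finset.mem_insert_self a s)).add
      (ih fun j hj => h j (Finset.mem_insert_of_mem hj))

lemma prefixFP_eq_sum_mod (τ : ℕ) (B : ℕ → ℕ) (i : ℕ) :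
    prefixFP τ B i = (∑ j ∈ Finset.range (i + 1), B j) % (2 ^ τ - 1) := by
  unfold prefixFP
  have h2 : (2 : ℕ) ^ τ ≡ 1 [MOD 2 ^ τ - 1] :=
    ((Nat.modEq_iff_dvd' Nat.one_le_two_pow).mpr dvd_rfl).symm
  have key : (∑ j ∈ Finset.range (i + 1), B j * 2 ^ ((i - j) * τ)) ≡
      (∑ j ∈ Finset.range (i + 1), B j) [MOD 2 ^ τ - 1] := by
    apply modEq_sum
    intro j _
    have : (2 : ℕ) ^ ((i - j) * τ) ≡ 1 [MOD 2 ^ τ - 1] := by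
      rw [mul_comm, pow_mul]
      simpa using h2.pow (i - j)
    simpa using (Nat.ModEq.refl (B j)).mul this
  exact key

/-- Let `τ ≥ 1`, `q = 2^τ − 1`, and let `B` and `B'` be two block sequences of
the same length `N` with values in `{0,…,2^τ−1}`.  Suppose that for every
`0 ≤ i < N` we have `B[i] = q ⟺ B'[i] = q`, and that the corresponding
prefix-fingerprint arrays agree at every position `i` with `B[i] ≠ q`.
Then `B` and `B'` agree at every position `i < N`: the sampled fingerprints at
non-`q` blocks together with the set of positions of `q`-blocks determine the
text uniquely. -/
theorem blocks_determined_by_fp (τ N : ℕ) (hτ : 1 ≤ τ) (B B' : ℕ → ℕ)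
    (hB : ∀ i < N, B i ≤ 2 ^ τ - 1) (hB' : ∀ i < N, B' i ≤ 2 ^ τ - 1)
    (hmark : ∀ i < N, (B i = 2 ^ τ - 1 ↔ B' i = 2 ^ τ - 1))
    (hfp : ∀ i < N, B i ≠ 2 ^ τ - 1 → prefixFP τ B i = prefixFP τ B' i) :
    ∀ i < N, B i = B' i := by
  intro i
  induction i using Nat.strong_induction_on with
  | _ i ih =>
    intro hiN
    by_cases hq : B i = 2 ^ τ - 1
    · rw [hq, ((hmark i hiN).mp hq)]
    · have hq' : B' i ≠ 2 ^ τ - 1 := fun h => hq ((hmark i hiN).mpr h)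
      have hsum : (∑ j ∈ Finset.range i, B j) = ∑ j ∈ Finset.range i, B' j :=
        Finset.sum_congr rfl fun j hj =>
          ih j (Finset.mem_range.mp hj) (lt_trans (Finset.mem_range.mp hj) hiN)
      have hfpe := hfp i hiN hq
      rw [prefixFP_eq_sum_mod, prefixFP_eq_sum_mod, Finset.sum_range_succ,
        Finset.sum_range_succ, hsum] at hfpe
      have hmod : B i ≡ B' i [MOD 2 ^ τ - 1] :=
        (Nat.ModEq.add_left_cancel' _ hfpe)
      have h1 : B i < 2 ^ τ - 1 := lt_of_le_of_ne (hB i hiN) hq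
      have h2 : B' i < 2 ^ τ - 1 := lt_of_le_of_ne (hB' i hiN) hq'
      have := hmod
      unfold Nat.ModEq at this
      rwa [Nat.mod_eq_of_lt h1, Nat.mod_eq_of_lt h2] at this
end

section
/- Let τ ≥ 1 and let q be an integer with 2^(τ−1) ≤ q ≤ 2^τ. Given blocks B[0],…,B[N−1] with 0 ≤ B[i] ≤ 2^τ − 1, define P'[i] = Σ_{j=0}^{i} B[j]·2^{(i−j)·τ} mod q (with P'[−1] = 0), and define D[i] = 1 if B[i] ≥ q and D[i] = 0 otherwise. Then for every 0 ≤ i < N, B[i] = ((P'[i] − 2^τ · P'[i−1]) mod q) + D[i]·q, where the inner subtraction is taken modulo q with result in {0,…,q−1}. -/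
/-- Prefix fingerprints modulo an arbitrary modulus `q` of a sequence of
`τ`-bit blocks `B`:  `P'[i] = Σ_{j=0}^{i} B[j]·2^((i−j)·τ) mod q`. -/
def prefixFPq (τ q : ℕ) (B : ℕ → ℕ) (i : ℕ) : ℕ :=
  (∑ j ∈ Finset.range (i + 1), B j * 2 ^ ((i - j) * τ)) % q

/-- Let `τ ≥ 1` and let `q` be an integer with `2^(τ−1) ≤ q ≤ 2^τ`.  Given
blocks `B[0],…,B[N−1]` with `0 ≤ B[i] ≤ 2^τ − 1`, define
`P'[i] = Σ_{j=0}^{i} B[j]·2^((i−j)·τ) mod q` (with `P'[−1] = 0`) and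
`D[i] = 1` if `B[i] ≥ q`, `D[i] = 0` otherwise.  Then for every `0 ≤ i < N`,
`B[i] = ((P'[i] − 2^τ · P'[i−1]) mod q) + D[i]·q`, where the inner subtraction
is taken modulo `q` with result in `{0,…,q−1}`. -/
theorem block_eq_fp_diff_general (τ q N : ℕ) (hτ : 1 ≤ τ)
    (hq1 : 2 ^ (τ - 1) ≤ q) (hq2 : q ≤ 2 ^ τ)
    (B : ℕ → ℕ) (hB : ∀ i < N, B i ≤ 2 ^ τ - 1)
    (D : ℕ → ℕ) (hD : ∀ i, D i = if q ≤ B i then 1 else 0)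
    (i : ℕ) (hiN : i < N) :
    B i = (prefixFPq τ q B i + q
            - (2 ^ τ * (if i = 0 then 0 else prefixFPq τ q B (i - 1))) % q) % q
          + D i * q := by
  have hq0 : 0 < q := lt_of_lt_of_le (by positivity : 0 < 2 ^ (τ - 1)) hq1
  -- B i < 2 * q
  have h2q : 2 ^ τ ≤ 2 * q := by
    calc 2 ^ τ = 2 * 2 ^ (τ - 1) := by
          rw [← pow_succ']
          congr 1
          omega
      _ ≤ 2 * q := by omega
  have hBi : B i ≤ 2 ^ τ - 1 := hB i hiN
  have hBlt : B i < 2 * q := by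
    have : 0 < 2 ^ τ := by positivity
    omega
  -- the previous (unreduced) sum
  set T : ℕ := if i = 0 then 0 else
      ∑ j ∈ Finset.range i, B j * 2 ^ ((i - 1 - j) * τ) with hT
  set S : ℕ := ∑ j ∈ Finset.range (i + 1), B j * 2 ^ ((i - j) * τ) with hSdef
  have hS : S = 2 ^ τ * T + B i := by
    rcases eq_or_ne i 0 with rfl | hi
    · simp [hSdef, hT]
    · rw [hSdef, Finset.sum_range_succ]
      simp only [hT, if_neg hi, Nat.sub_self, Nat.zero_mul, pow_zero, mul_one]
      rw [Finset.mul_sum]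
      congr 1
      apply Finset.sum_congr rfl
      intro j hj
      have hj' : j < i := Finset.mem_range.mp hj
      have : (i - j) * τ = τ + (i - 1 - j) * τ := by
        have : i - j = 1 + (i - 1 - j) := by omega
        rw [this, Nat.add_mul, one_mul]
      rw [this, pow_add]
      ring
  have hP : (if i = 0 then 0 else prefixFPq τ q B (i - 1)) = T % q := by
    rcases eq_or_ne i 0 with rfl | hi
    · simp [hT]
    · simp only [if_neg hi, prefixFPq, hT]
      congr 1
      have : i - 1 + 1 = i := by omega
      rw [this]
  rw [hP]
  set t : ℕ := (2 ^ τ * (T % q)) % q with ht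
  have htq : t < q := Nat.mod_lt _ hq0
  have hPiq : prefixFPq τ q B i = S % q := rfl
  have hkey : (prefixFPq τ q B i + q - t) % q = B i % q := by
    have hle : t ≤ prefixFPq τ q B i + q := by omega
    have hmodeq : (prefixFPq τ q B i + q - t) ≡ B i [MOD q] := by
      have h1 : (prefixFPq τ q B i + q - t) + t ≡ B i + t [MOD q] := by
        rw [Nat.sub_add_cancel hle]
        calc prefixFPq τ q B i + q ≡ S + q [MOD q] := by
              rw [hPiq]; exact Nat.ModEq.add_right _ (Nat.mod_modEq _ _)
          _ ≡ S [MOD q] := by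
              simpa using (Nat.ModEq.add_left S (Nat.modEq_zero_iff_dvd.mpr dvd_rfl))
          _ = 2 ^ τ * T + B i := hS
          _ ≡ 2 ^ τ * (T % q) + B i [MOD q] :=
              Nat.ModEq.add_right _ (Nat.ModEq.mul_left _ (Nat.mod_modEq _ _).symm)
          _ ≡ t + B i [MOD q] := Nat.ModEq.add_right _ (Nat.mod_modEq _ _).symm
          _ = B i + t := by ring
      exact h1.add_right_cancel' t
    exact hmodeq
  rw [hkey, hD i]
  rcases le_or_gt q (B i) with h | h
  · rw [if_pos h, Nat.mod_eq_sub_mod h, Nat.mod_eq_of_lt (by omega)]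
    omega
  · rw [if_neg (not_le.mpr h), Nat.mod_eq_of_lt h]; omega
end

section
/- Let b ≥ 1 and let c : ℕ → ℕ be a sequence with c(k) < 2^b − 1 for all k. Define the binary sequence T' : ℕ → {0,1} by T'(m) = ⌊c(⌊m/b⌋) / 2^(b−1−(m mod b))⌋ mod 2 (the concatenation of the b-bit big-endian representations of the c(k)). Then every window of 2b consecutive bits of T' contains a 0: for every i there exists j < 2b with T'(i + j) = 0. -/
/-- In any natural number `n < 2^b - 1`, some bit among the low `b` bits is zero. -/
lemma exists_zero_bit (b : ℕ) (n : ℕ) (hn : n < 2 ^ b - 1) :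
    ∃ s < b, n / 2 ^ s % 2 = 0 := by
  by_contra h
  push_neg at h
  have hlt : n < 2 ^ b := lt_of_lt_of_le hn (Nat.sub_le _ _)
  have : n = 2 ^ b - 1 := by
    apply Nat.eq_of_testBit_eq
    intro s
    rw [Nat.testBit_two_pow_sub_one]
    by_cases hs : s < b
    · have h1 := h s hs
      have h2 : n / 2 ^ s % 2 = 1 := by omega
      simp [Nat.testBit_eq_decide_div_mod_eq, h2, hs]
    · have : n < 2 ^ s := lt_of_lt_of_le hlt (Nat.pow_le_pow_right (by norm_num) (by omega))
      simp [Nat.testBit_lt_two_pow this, hs]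
  omega

/-- Let `b ≥ 1` and let `c : ℕ → ℕ` be a sequence of character codes with
`c(k) < 2^b − 1` for all `k`.  Define the binary sequence `T'` by
`T'(m) = ⌊c(⌊m/b⌋) / 2^(b−1−(m mod b))⌋ mod 2` (the concatenation of the
`b`-bit big-endian representations of the `c(k)`).  Then every window of `2b`
consecutive bits of `T'` contains a `0`. -/
theorem zero_in_every_window (b : ℕ) (hb : 1 ≤ b) (c : ℕ → ℕ)
    (hc : ∀ k, c k < 2 ^ b - 1)
    (T' : ℕ → ℕ) (hT' : ∀ m, T' m = c (m / b) / 2 ^ (b - 1 - m % b) % 2) :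
    ∀ i, ∃ j < 2 * b, T' (i + j) = 0 := by
  intro i
  set k := i / b + 1 with hk
  obtain ⟨s, hs, hzero⟩ := exists_zero_bit b (c k) (hc k)
  -- position within block k, counting from the MSB
  set t := b - 1 - s with ht
  have htb : t < b := by omega
  have hdivmod : i % b + b * (i / b) = i := Nat.mod_add_div i b
  have hbk : b * k = b * (i / b) + b := by rw [hk]; ring
  have hile : i ≤ b * k := by
    have := Nat.mod_lt i (show 0 < b by omega)
    omega
  have hle2 : b * k + t < i + 2 * b := by omega
  refine ⟨b * k + t - i, by omega, ?_⟩
  have him : i + (b * k + t - i) = b * k + t := by omega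
  rw [him, hT']
  have hdiv : (b * k + t) / b = k := by
    rw [Nat.mul_add_div (show 0 < b by omega), Nat.div_eq_of_lt htb, add_zero]
  have hmod : (b * k + t) % b = t := by
    rw [Nat.mul_add_mod, Nat.mod_eq_of_lt htb]
  rw [hdiv, hmod]
  have : b - 1 - t = s := by omega
  rw [this]
  exact hzero
end

section
/- Let σ ≥ 2, let b be a positive integer with σ ≤ 2^b, and let T be a string of length n over {0,…,σ−1}. Let T' be the binary string of length n·b defined by T'[a·b + r] = ⌊T[a] / 2^(b−1−r)⌋ mod 2 for 0 ≤ a < n and 0 ≤ r < b. For a string S of length m and indices i, j < m, define LCE_S(i,j) as the largest ℓ with ℓ ≤ m − i and ℓ ≤ m − j such that S[i+k] = S[j+k] for all k < ℓ. Then for all 0 ≤ i, j < n, LCE_T(i,j) = ⌊LCE_{T'}(i·b, j·b) / b⌋. -/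
/-- `LCE S m i j` is the length of the longest common prefix of the suffixes
starting at positions `i` and `j` of the string of length `m` whose characters
are given by `S`: the largest `ℓ` with `ℓ ≤ m − i` and `ℓ ≤ m − j` such that
`S (i+k) = S (j+k)` for all `k < ℓ`. -/
def LCE (S : ℕ → ℕ) (m i j : ℕ) : ℕ :=
  Nat.findGreatest (fun ℓ => ℓ ≤ m - i ∧ ℓ ≤ m - j ∧ ∀ k < ℓ, S (i + k) = S (j + k)) m

private lemma eq_of_bits_eq (b x y : ℕ) (hx : x < 2 ^ b) (hy : y < 2 ^ b)
    (h : ∀ r < b, x / 2 ^ (b - 1 - r) % 2 = y / 2 ^ (b - 1 - r) % 2) : x = y := by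
  apply Nat.eq_of_testBit_eq
  intro s
  by_cases hs : s < b
  · have h1 := h (b - 1 - s) (by omega)
    have h2 : b - 1 - (b - 1 - s) = s := by omega
    rw [h2] at h1
    rw [Nat.testBit_eq_decide_div_mod_eq, Nat.testBit_eq_decide_div_mod_eq, h1]
  · rw [Nat.testBit_lt_two_pow (lt_of_lt_of_le hx (Nat.pow_le_pow_right (by norm_num) (by omega))),
      Nat.testBit_lt_two_pow (lt_of_lt_of_le hy (Nat.pow_le_pow_right (by norm_num) (by omega)))]

/-- Let `σ ≥ 2`, let `b ≥ 1` with `σ ≤ 2^b`, and let `T` be a string of length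
`n` over `{0,…,σ−1}`.  Let `T'` be the binary string of length `n·b` defined by
`T'[a·b + r] = ⌊T[a] / 2^(b−1−r)⌋ mod 2` for `0 ≤ a < n`, `0 ≤ r < b` (the
concatenation of the `b`-bit big-endian representations of the characters of
`T`).  Then for all `0 ≤ i, j < n`,
`LCE_T(i,j) = ⌊LCE_{T'}(i·b, j·b) / b⌋`. -/
theorem lce_binary_reduction (σ b n : ℕ) (hσ : 2 ≤ σ) (hb : 1 ≤ b)
    (hσb : σ ≤ 2 ^ b) (T : ℕ → ℕ) (hT : ∀ a < n, T a < σ)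
    (T' : ℕ → ℕ)
    (hT' : ∀ a < n, ∀ r < b, T' (a * b + r) = T a / 2 ^ (b - 1 - r) % 2) :
    ∀ i < n, ∀ j < n, LCE T n i j = LCE T' (n * b) (i * b) (j * b) / b := by
  intro i hi j hj
  set L := LCE T n i j with hLdef
  set L' := LCE T' (n * b) (i * b) (j * b) with hL'def
  have hP : L ≤ n - i ∧ L ≤ n - j ∧ ∀ k < L, T (i + k) = T (j + k) :=
    Nat.findGreatest_spec
      (P := fun ℓ => ℓ ≤ n - i ∧ ℓ ≤ n - j ∧ ∀ k < ℓ, T (i + k) = T (j + k))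
      (Nat.zero_le n)
      ⟨Nat.zero_le _, Nat.zero_le _, fun k hk => absurd hk (Nat.not_lt_zero k)⟩
  have hLn : L ≤ n := Nat.findGreatest_le n
  have hP' : L' ≤ n * b - i * b ∧ L' ≤ n * b - j * b ∧
      ∀ k < L', T' (i * b + k) = T' (j * b + k) :=
    Nat.findGreatest_spec
      (P := fun ℓ => ℓ ≤ n * b - i * b ∧ ℓ ≤ n * b - j * b ∧
        ∀ k < ℓ, T' (i * b + k) = T' (j * b + k))
      (Nat.zero_le _)
      ⟨Nat.zero_le _, Nat.zero_le _, fun k hk => absurd hk (Nat.not_lt_zero k)⟩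
  have hsubi : n * b - i * b = (n - i) * b := by rw [Nat.sub_mul]
  have hsubj : n * b - j * b = (n - j) * b := by rw [Nat.sub_mul]
  -- matching bits below L*b
  have hbits : ∀ k < L * b, T' (i * b + k) = T' (j * b + k) := by
    intro k hk
    have ha : k / b < L := (Nat.div_lt_iff_lt_mul (by omega)).mpr hk
    have hr : k % b < b := Nat.mod_lt _ (by omega)
    have hdm := Nat.div_add_mod k b
    have hia : i + k / b < n := by omega
    have hja : j + k / b < n := by omega
    have e1 : i * b + k = (i + k / b) * b + k % b := by
      rw [Nat.add_mul, Nat.mul_comm (k / b) b]; omega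
    have e2 : j * b + k = (j + k / b) * b + k % b := by
      rw [Nat.add_mul, Nat.mul_comm (k / b) b]; omega
    rw [e1, e2, hT' _ hia _ hr, hT' _ hja _ hr, hP.2.2 _ ha]
  have hlow : L * b ≤ L' := by
    apply Nat.le_findGreatest
      (P := fun ℓ => ℓ ≤ n * b - i * b ∧ ℓ ≤ n * b - j * b ∧
        ∀ k < ℓ, T' (i * b + k) = T' (j * b + k))
    · exact Nat.mul_le_mul_right b hLn
    · refine ⟨?_, ?_, hbits⟩
      · rw [hsubi]; exact Nat.mul_le_mul_right b hP.1
      · rw [hsubj]; exact Nat.mul_le_mul_right b hP.2.1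
  by_cases hmax : L = n - i ∨ L = n - j
  · have hup : L' ≤ L * b := by
      rcases hmax with h | h
      · have := hP'.1; rw [hsubi, ← h] at this; exact this
      · have := hP'.2.1; rw [hsubj, ← h] at this; exact this
    have : L' = L * b := le_antisymm hup hlow
    rw [this, Nat.mul_div_cancel L (by omega)]
  · push_neg at hmax
    have hiL : i + L < n := by omega
    have hjL : j + L < n := by omega
    have hne : T (i + L) ≠ T (j + L) := by
      intro heq
      have hng : ¬(L + 1 ≤ n - i ∧ L + 1 ≤ n - j ∧ ∀ k < L + 1, T (i + k) = T (j + k)) :=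
        Nat.findGreatest_is_greatest
          (P := fun ℓ => ℓ ≤ n - i ∧ ℓ ≤ n - j ∧ ∀ k < ℓ, T (i + k) = T (j + k))
          (Nat.lt_succ_self L) (by omega)
      apply hng
      refine ⟨by omega, by omega, fun k hk => ?_⟩
      rcases Nat.lt_succ_iff_lt_or_eq.mp hk with h | h
      · exact hP.2.2 _ h
      · rw [h]; exact heq
    obtain ⟨r, hrb, hrne⟩ :
        ∃ r < b, T (i + L) / 2 ^ (b - 1 - r) % 2 ≠ T (j + L) / 2 ^ (b - 1 - r) % 2 := by
      by_contra h
      push_neg at h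
      exact hne (eq_of_bits_eq b _ _ (lt_of_lt_of_le (hT _ hiL) hσb)
        (lt_of_lt_of_le (hT _ hjL) hσb) h)
    have hup : L' ≤ L * b + r := by
      by_contra h
      push_neg at h
      have heq := hP'.2.2 (L * b + r) h
      have e1 : i * b + (L * b + r) = (i + L) * b + r := by rw [Nat.add_mul]; omega
      have e2 : j * b + (L * b + r) = (j + L) * b + r := by rw [Nat.add_mul]; omega
      rw [e1, e2, hT' _ hiL _ hrb, hT' _ hjL _ hrb] at heq
      exact hrne heq
    exact (Nat.div_eq_of_lt_le hlow (by rw [Nat.add_mul]; omega)).symm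
end
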